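/- Cone-based positivity of the stability tensor: let Ω ⊂ ℝ^d satisfy the interior cone condition with angle θ > 0 and radius λ > 0, and let ρ(y,x) ≥ γ̃/(ε^d ω_d |y-x|) on Ω ∩ H_ε(x). Then the matrix A(x) = ∫_{Ω∩H_ε(x)} ρ(y,x) e_{y-x} ⊗ e_{y-x} dy satisfies ηᵀA(x)η ≥ γ|η|² for all unit vectors η and all x ∈ Ω, for some γ > 0 depending only on θ, λ, ε, d, γ̃. -/

import Mathlib

open MeasureTheory Metric
open scoped RealInnerProductSpace

private lemma contIntOn {d : ℕ} {f : EuclideanSpace ℝ (Fin d) → ℝ} (hf : Continuous f)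
    (c : EuclideanSpace ℝ (Fin d)) (r : ℝ) : IntegrableOn f (ball c r) :=
  (hf.locallyIntegrable.integrableOn_isCompact (isCompact_closedBall c r)).mono_set
    ball_subset_closedBall

private lemma contInner {d : ℕ} (v : EuclideanSpace ℝ (Fin d)) :
    Continuous fun z : EuclideanSpace ℝ (Fin d) => ⟪z, v⟫ :=
  continuous_id.inner continuous_const

/-- Rotation invariance of the quadratic moment over a centred ball. -/
private lemma rot_inv {d : ℕ} (r : ℝ) (u v : EuclideanSpace ℝ (Fin d))
    (hu : ‖u‖ = 1) (hv : ‖v‖ = 1) :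
    ∫ z in ball (0 : EuclideanSpace ℝ (Fin d)) r, ⟪z, v⟫ ^ 2
      = ∫ z in ball (0 : EuclideanSpace ℝ (Fin d)) r, ⟪z, u⟫ ^ 2 := by
  by_cases hvu : v = -u
  · subst hvu; simp [inner_neg_right]
  · set w := u + v with hw
    have hw0 : w ≠ 0 := by
      intro h
      apply hvu
      have : v = -u := by linear_combination (norm := module) h
      exact this
    set t := ⟪u, v⟫ with hts
    have hnw : ‖w‖ ^ 2 = 2 + 2 * t := by
      rw [hw, norm_add_sq_real, hu, hv]; ring
    have ht : (2 : ℝ) + 2 * t ≠ 0 := by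
      rw [← hnw]
      exact pow_ne_zero _ (norm_ne_zero_iff.mpr hw0)
    set T := Submodule.reflection (Submodule.span ℝ ({w} : Set (EuclideanSpace ℝ (Fin d)))) with hT
    have hTu : T u = v := by
      rw [hT, Submodule.reflection_singleton_apply]
      have h1 : ⟪w, u⟫ = 1 + t := by
        rw [hw, inner_add_left, real_inner_self_eq_norm_sq, hu, real_inner_comm]
        ring
      simp only [RCLike.ofReal_real_eq_id, id_eq]
      rw [h1, hnw]
      have h2 : (1 + t) / (2 + 2 * t) = 1 / 2 := by
        rw [div_eq_div_iff ht two_ne_zero]; ring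
      rw [h2, hw]
      match_scalars <;> ring
    have hTv : T v = u := by rw [← hTu, hT, Submodule.reflection_reflection]
    have hmp := T.measurePreserving
    have hemb : MeasurableEmbedding T := T.toHomeomorph.measurableEmbedding
    have hpre : (⇑T) ⁻¹' (ball (0 : EuclideanSpace ℝ (Fin d)) r) = ball 0 r := by
      ext z
      simp [mem_ball, dist_zero_right, T.norm_map]
    calc ∫ z in ball (0 : EuclideanSpace ℝ (Fin d)) r, ⟪z, v⟫ ^ 2
        = ∫ z in (⇑T) ⁻¹' (ball (0 : EuclideanSpace ℝ (Fin d)) r), ⟪T z, v⟫ ^ 2 :=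
          (hmp.setIntegral_preimage_emb hemb (fun z => ⟪z, v⟫ ^ 2) _).symm
      _ = ∫ z in ball (0 : EuclideanSpace ℝ (Fin d)) r, ⟪T z, T u⟫ ^ 2 := by rw [hpre, hTu]
      _ = ∫ z in ball (0 : EuclideanSpace ℝ (Fin d)) r, ⟪z, u⟫ ^ 2 := by
          simp_rw [T.inner_map_map]

/-- The first moment over a centred ball vanishes. -/
private lemma odd_int {d : ℕ} (r : ℝ) (η : EuclideanSpace ℝ (Fin d)) :
    ∫ z in ball (0 : EuclideanSpace ℝ (Fin d)) r, ⟪z, η⟫ = 0 := by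
  have hmp := Measure.measurePreserving_neg (volume : Measure (EuclideanSpace ℝ (Fin d)))
  have hemb : MeasurableEmbedding (Neg.neg : EuclideanSpace ℝ (Fin d) → _) :=
    (MeasurableEquiv.neg (EuclideanSpace ℝ (Fin d))).measurableEmbedding
  have hpre : (Neg.neg : EuclideanSpace ℝ (Fin d) → _) ⁻¹' (ball 0 r) = ball 0 r := by
    ext z; simp [mem_ball, dist_zero_right]
  have h := hmp.setIntegral_preimage_emb hemb (fun z => ⟪z, η⟫) (ball 0 r)
  rw [hpre] at h
  simp only [inner_neg_left] at h
  rw [integral_neg] at h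
  linarith

/-- Translation lower bound: the quadratic moment only increases off-centre. -/
private lemma transl_ge {d : ℕ} (r : ℝ) (c x η : EuclideanSpace ℝ (Fin d)) :
    ∫ z in ball (0 : EuclideanSpace ℝ (Fin d)) r, ⟪z, η⟫ ^ 2
      ≤ ∫ y in ball c r, ⟪y - x, η⟫ ^ 2 := by
  set w := c - x with hws
  have hmp := measurePreserving_add_right (volume : Measure (EuclideanSpace ℝ (Fin d))) c
  have hemb : MeasurableEmbedding (fun z : EuclideanSpace ℝ (Fin d) => z + c) :=
    (MeasurableEquiv.addRight c).measurableEmbedding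
  have hpre : (fun z : EuclideanSpace ℝ (Fin d) => z + c) ⁻¹' (ball c r) = ball 0 r := by
    ext z; simp [mem_ball, dist_eq_norm]
  have h := hmp.setIntegral_preimage_emb hemb (fun y => ⟪y - x, η⟫ ^ 2) (ball c r)
  rw [hpre] at h
  rw [← h]
  have hint : ∀ z : EuclideanSpace ℝ (Fin d), ⟪z + c - x, η⟫ ^ 2
      = ⟪z, η⟫ ^ 2 + ((2 * ⟪w, η⟫) * ⟪z, η⟫ + ⟪w, η⟫ ^ 2) := by
    intro z
    have : z + c - x = z + w := by rw [hws]; abel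
    rw [this, inner_add_left]; ring
  simp_rw [hint]
  have i1 : IntegrableOn (fun z : EuclideanSpace ℝ (Fin d) => ⟪z, η⟫ ^ 2) (ball 0 r) :=
    contIntOn ((contInner η).pow 2) _ _
  have i2 : IntegrableOn (fun z : EuclideanSpace ℝ (Fin d) =>
      (2 * ⟪w, η⟫) * ⟪z, η⟫ + ⟪w, η⟫ ^ 2) (ball 0 r) :=
    contIntOn ((continuous_const.mul (contInner η)).add continuous_const) _ _
  rw [integral_add i1 i2]
  have i3 : IntegrableOn (fun z : EuclideanSpace ℝ (Fin d) =>
      (2 * ⟪w, η⟫) * ⟪z, η⟫) (ball 0 r) := contIntOn (continuous_const.mul (contInner η)) _ _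
  have i4 : IntegrableOn (fun _ : EuclideanSpace ℝ (Fin d) => ⟪w, η⟫ ^ 2) (ball 0 r) :=
    contIntOn (by continuity) _ _
  rw [integral_add i3 i4]
  rw [integral_const_mul, odd_int, setIntegral_const]
  have : (0:ℝ) ≤ (volume (ball (0 : EuclideanSpace ℝ (Fin d)) r)).toReal • ⟪w, η⟫ ^ 2 := by
    have := ENNReal.toReal_nonneg (a := volume (ball (0 : EuclideanSpace ℝ (Fin d)) r))
    positivity
  rw [mul_zero, zero_add]; exact le_add_of_nonneg_right this

/-- Positivity of the quadratic moment. -/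
private lemma mom_pos {d : ℕ} (r : ℝ) (hr : 0 < r) (u : EuclideanSpace ℝ (Fin d))
    (hu : ‖u‖ = 1) :
    0 < ∫ z in ball (0 : EuclideanSpace ℝ (Fin d)) r, ⟪z, u⟫ ^ 2 := by
  set c' : EuclideanSpace ℝ (Fin d) := (3 * r / 4) • u with hc'
  have hsub : ball c' (r / 8) ⊆ ball (0 : EuclideanSpace ℝ (Fin d)) r := by
    intro z hz
    rw [mem_ball, dist_zero_right]
    rw [mem_ball, dist_eq_norm] at hz
    have h1 : ‖z‖ ≤ ‖z - c'‖ + ‖c'‖ := by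
      have := norm_sub_norm_le z c'
      have := norm_sub_le z c'
      calc ‖z‖ = ‖(z - c') + c'‖ := by rw [sub_add_cancel]
        _ ≤ ‖z - c'‖ + ‖c'‖ := norm_add_le _ _
    have h2 : ‖c'‖ = 3 * r / 4 := by
      rw [hc', norm_smul, hu, Real.norm_eq_abs, abs_of_pos (by linarith), mul_one]
    linarith
  have hlow : ∀ z ∈ ball c' (r / 8), (r / 2) ^ 2 ≤ ⟪z, u⟫ ^ 2 := by
    intro z hz
    rw [mem_ball, dist_eq_norm] at hz
    have h1 : ⟪z, u⟫ = 3 * r / 4 + ⟪z - c', u⟫ := by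
      rw [inner_sub_left, hc', real_inner_smul_left, real_inner_self_eq_norm_sq, hu]
      ring
    have h2 : |⟪z - c', u⟫| ≤ ‖z - c'‖ := by
      have := abs_real_inner_le_norm (z - c') u
      rwa [hu, mul_one] at this
    have h3 : r / 2 ≤ ⟪z, u⟫ := by
      have := abs_le.mp h2
      linarith [this.1]
    have := pow_le_pow_left₀ (by positivity : (0:ℝ) ≤ r / 2) h3 2
    exact this
  have hcont : IntegrableOn (fun z : EuclideanSpace ℝ (Fin d) => ⟪z, u⟫ ^ 2)
      (ball (0 : EuclideanSpace ℝ (Fin d)) r) := contIntOn ((contInner u).pow 2) _ _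
  have step1 : ∫ z in ball c' (r / 8), ⟪z, u⟫ ^ 2
      ≤ ∫ z in ball (0 : EuclideanSpace ℝ (Fin d)) r, ⟪z, u⟫ ^ 2 := by
    refine setIntegral_mono_set hcont ?_ (HasSubset.Subset.eventuallyLE hsub)
    exact Filter.Eventually.of_forall fun z => sq_nonneg _
  have step2 : ∫ z in ball c' (r / 8), ((r / 2) ^ 2 : ℝ)
      ≤ ∫ z in ball c' (r / 8), ⟪z, u⟫ ^ 2 := by
    refine setIntegral_mono_on ?_ ?_ measurableSet_ball hlow
    · exact contIntOn continuous_const _ _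
    · exact contIntOn ((contInner u).pow 2) _ _
  have hvol : 0 < (volume (ball c' (r / 8))).toReal :=
    ENNReal.toReal_pos (measure_ball_pos volume c' (by linarith)).ne' measure_ball_lt_top.ne
  have step0 : (0:ℝ) < ∫ z in ball c' (r / 8), ((r / 2) ^ 2 : ℝ) := by
    rw [setIntegral_const]
    positivity
  linarith

/-- The unit vector `e_{y-x} = (y-x)/|y-x|`. -/
noncomputable def unitVec {d : ℕ} (y x : EuclideanSpace ℝ (Fin d)) :
    EuclideanSpace ℝ (Fin d) := ‖y - x‖⁻¹ • (y - x)

/-- The spherical cone with apex `x`, axis `e`, radius `lam` and half-aperture `θ`. -/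
def sphericalCone {d : ℕ} (x e : EuclideanSpace ℝ (Fin d)) (lam θ : ℝ) :
    Set (EuclideanSpace ℝ (Fin d)) :=
  {y | ‖y - x‖ ≤ lam ∧ ‖y - x‖ * Real.cos θ ≤ ⟪y - x, e⟫}

set_option maxHeartbeats 1000000 in
theorem stmt_16 (d : ℕ) (hd : d = 2 ∨ d = 3) (θ lam ε γt : ℝ)
    (hθ : 0 < θ) (hθ2 : θ < Real.pi / 2) (hlam : 0 < lam) (hlamε : lam ≤ ε)
    (hε : 0 < ε) (hγt : 0 < γt) :
    -- `γ` depends only on `θ`, `lam`, `ε`, `d`, `γt`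
    ∃ γ > 0, ∀ (Ω : Set (EuclideanSpace ℝ (Fin d))),
      MeasurableSet Ω → Bornology.IsBounded Ω →
      (∀ x ∈ Ω, ∃ e : EuclideanSpace ℝ (Fin d), ‖e‖ = 1 ∧
        sphericalCone x e lam θ ⊆ Ω) →
      ∀ (ρ : EuclideanSpace ℝ (Fin d) → EuclideanSpace ℝ (Fin d) → ℝ),
        (∀ x ∈ Ω, ∀ y ∈ Ω ∩ Metric.ball x ε, y ≠ x →
          γt / (ε ^ d *
            (volume (Metric.ball (0 : EuclideanSpace ℝ (Fin d)) 1)).toReal * ‖y - x‖)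
            ≤ ρ y x) →
        (∀ x ∈ Ω, IntegrableOn (fun y => ρ y x) (Ω ∩ Metric.ball x ε)) →
        ∀ x ∈ Ω, ∀ η : EuclideanSpace ℝ (Fin d),
          γ * ‖η‖ ^ 2 ≤ ∫ y in Ω ∩ Metric.ball x ε, ρ y x * ⟪unitVec y x, η⟫ ^ 2 := by
  have hd0 : 0 < d := by rcases hd with h | h <;> omega
  have hπ := Real.pi_pos
  have hcos_pos : 0 < Real.cos θ := Real.cos_pos_of_mem_Ioo ⟨by linarith, hθ2⟩
  have hcos_lt : Real.cos θ < 1 := by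
    have h := Real.cos_lt_cos_of_nonneg_of_le_pi le_rfl (by linarith) hθ
    rwa [Real.cos_zero] at h
  set s : ℝ := min ((1 - Real.cos θ) / (1 + Real.cos θ)) (1 / 2) with hs
  have h1c : (0:ℝ) < 1 + Real.cos θ := by linarith
  have hspos : 0 < s := lt_min (div_pos (by linarith) h1c) (by norm_num)
  have hs2 : s ≤ 1 / 2 := min_le_right _ _
  have hs1 : s * (1 + Real.cos θ) ≤ 1 - Real.cos θ :=
    (le_div_iff₀ h1c).mp (min_le_left _ _)
  set r : ℝ := lam / 2 * s with hrdef
  have hrpos : 0 < r := by positivity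
  have hrlam : r ≤ lam / 4 := by rw [hrdef]; nlinarith
  have hrcone : r * (1 + Real.cos θ) ≤ lam / 2 * (1 - Real.cos θ) := by
    rw [hrdef, mul_assoc]
    have := mul_le_mul_of_nonneg_left hs1 (by linarith : (0:ℝ) ≤ lam / 2)
    linarith
  have hω : 0 < (volume (ball (0 : EuclideanSpace ℝ (Fin d)) 1)).toReal :=
    ENNReal.toReal_pos (measure_ball_pos _ _ one_pos).ne' measure_ball_lt_top.ne
  set W : ℝ := (volume (ball (0 : EuclideanSpace ℝ (Fin d)) 1)).toReal with hW
  set c₀ : ℝ := γt / (ε ^ d * W) with hc₀def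
  have hc₀ : 0 < c₀ := div_pos hγt (mul_pos (pow_pos hε d) hω)
  set u₀ : EuclideanSpace ℝ (Fin d) := EuclideanSpace.single (⟨0, hd0⟩ : Fin d) (1:ℝ) with hu₀def
  have hu₀ : ‖u₀‖ = 1 := by rw [hu₀def, EuclideanSpace.norm_single]; norm_num
  set κ : ℝ := ∫ z in ball (0 : EuclideanSpace ℝ (Fin d)) r, ⟪z, u₀⟫ ^ 2 with hκdef
  have hκ : 0 < κ := mom_pos r hrpos u₀ hu₀
  refine ⟨c₀ / lam ^ 3 * κ, mul_pos (div_pos hc₀ (pow_pos hlam 3)) hκ, ?_⟩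
  intro Ω hΩm hΩb hcone ρ hρ hρint x hx η
  obtain ⟨e, he1, heΩ⟩ := hcone x hx
  set c : EuclideanSpace ℝ (Fin d) := x + (lam / 2) • e with hcdef
  have hcx : ∀ y : EuclideanSpace ℝ (Fin d), y - x = (y - c) + (lam / 2) • e := by
    intro y; rw [hcdef]; abel
  have hnsmul : ‖(lam / 2) • e‖ = lam / 2 := by
    rw [norm_smul, he1, Real.norm_eq_abs, abs_of_pos (by linarith), mul_one]
  have hyxub : ∀ y ∈ ball c r, ‖y - x‖ ≤ ‖y - c‖ + lam / 2 := by
    intro y _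
    rw [hcx y]
    refine le_trans (norm_add_le _ _) ?_
    rw [hnsmul]
  have hball_sub : ball c r ⊆ Ω ∩ ball x ε := by
    intro y hy
    have hyc : ‖y - c‖ < r := by rwa [mem_ball, dist_eq_norm] at hy
    have hub := hyxub y hy
    have hyxlam : ‖y - x‖ ≤ lam := by linarith
    have hinner : lam / 2 - ‖y - c‖ ≤ ⟪y - x, e⟫ := by
      rw [hcx y, inner_add_left, real_inner_smul_left, real_inner_self_eq_norm_sq, he1]
      have h2 := abs_real_inner_le_norm (y - c) e
      rw [he1, mul_one] at h2
      have := (abs_le.mp h2).1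
      nlinarith
    have hcone_mem : y ∈ sphericalCone x e lam θ := by
      refine ⟨hyxlam, ?_⟩
      have h1 : ‖y - x‖ * Real.cos θ ≤ (lam / 2 + ‖y - c‖) * Real.cos θ :=
        mul_le_mul_of_nonneg_right (by linarith) hcos_pos.le
      have h3 := mul_le_mul_of_nonneg_right hyc.le (by linarith : (0:ℝ) ≤ 1 + Real.cos θ)
      nlinarith
    exact ⟨heΩ hcone_mem, by rw [mem_ball, dist_eq_norm]; linarith⟩
  have hxlow : ∀ y ∈ ball c r, lam / 4 ≤ ‖y - x‖ := by
    intro y hy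
    have hyc : ‖y - c‖ < r := by rwa [mem_ball, dist_eq_norm] at hy
    have hcxn : ‖c - x‖ = lam / 2 := by
      rw [hcdef, add_sub_cancel_left, hnsmul]
    have h := norm_sub_norm_le (c - x) (c - y)
    rw [show (c - x) - (c - y) = y - x by abel, hcxn, norm_sub_rev c y] at h
    linarith
  rcases eq_or_ne η 0 with rfl | hη
  · simp
  have hmeasu : Measurable fun y : EuclideanSpace ℝ (Fin d) => ⟪unitVec y x, η⟫ ^ 2 := by
    have h1 : Measurable fun y : EuclideanSpace ℝ (Fin d) => unitVec y x := by
      have hsub : Measurable fun y : EuclideanSpace ℝ (Fin d) => y - x :=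
        measurable_id.sub measurable_const
      exact (hsub.norm.inv).smul hsub
    exact (h1.inner measurable_const).pow_const 2
  have hgnn : ∀ y ∈ Ω ∩ ball x ε, 0 ≤ ρ y x * ⟪unitVec y x, η⟫ ^ 2 := by
    intro y hy
    by_cases hyx : y = x
    · subst hyx; simp [unitVec]
    · have h := hρ x hx y hy hyx
      have hb : 0 ≤ γt / (ε ^ d * W * ‖y - x‖) :=
        div_nonneg hγt.le
          (mul_nonneg (mul_nonneg (pow_nonneg hε.le d) hω.le) (norm_nonneg _))
      exact mul_nonneg (le_trans hb h) (sq_nonneg _)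
  have hInt : IntegrableOn (fun y => ρ y x * ⟪unitVec y x, η⟫ ^ 2) (Ω ∩ ball x ε) := by
    have hb : ∃ C, ∀ y : EuclideanSpace ℝ (Fin d), ‖⟪unitVec y x, η⟫ ^ 2‖ ≤ C := by
      refine ⟨‖η‖ ^ 2, fun y => ?_⟩
      have hnu : ‖unitVec y x‖ ≤ 1 := by
        rw [unitVec, norm_smul, Real.norm_eq_abs, abs_of_nonneg (by positivity)]
        rcases eq_or_ne (‖y - x‖) 0 with h0 | h0
        · rw [h0]; simp
        · rw [inv_mul_cancel₀ h0]
      have h2 := abs_real_inner_le_norm (unitVec y x) η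
      have h3 : |⟪unitVec y x, η⟫| ≤ ‖η‖ := by nlinarith [norm_nonneg η]
      rw [norm_pow, Real.norm_eq_abs]
      exact pow_le_pow_left₀ (abs_nonneg _) h3 2
    have h2 := (hρint x hx).bdd_mul hmeasu.aestronglyMeasurable (Filter.Eventually.of_forall hb.choose_spec)
    simpa [mul_comm, IntegrableOn] using h2
  have hpt : ∀ y ∈ ball c r,
      (c₀ / lam ^ 3) * ⟪y - x, η⟫ ^ 2 ≤ ρ y x * ⟪unitVec y x, η⟫ ^ 2 := by
    intro y hy
    have hyc : ‖y - c‖ < r := by rwa [mem_ball, dist_eq_norm] at hy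
    have hylam : ‖y - x‖ ≤ lam := by
      have := hyxub y hy; linarith
    have hylow : lam / 4 ≤ ‖y - x‖ := hxlow y hy
    have hypos : 0 < ‖y - x‖ := by linarith
    have hyn0 : ‖y - x‖ ≠ 0 := hypos.ne'
    have hyx : y ≠ x := fun h => hyn0 (by rw [h, sub_self, norm_zero])
    have hρy := hρ x hx y (hball_sub hy) hyx
    have hρy' : c₀ / ‖y - x‖ ≤ ρ y x := by
      rw [hc₀def, div_div]; exact hρy
    have hiv : ⟪unitVec y x, η⟫ ^ 2 = (‖y - x‖⁻¹) ^ 2 * ⟪y - x, η⟫ ^ 2 := by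
      rw [unitVec, real_inner_smul_left, mul_pow]
    rw [hiv]
    calc (c₀ / lam ^ 3) * ⟪y - x, η⟫ ^ 2
        ≤ (c₀ / ‖y - x‖ ^ 3) * ⟪y - x, η⟫ ^ 2 := by gcongr
      _ = (c₀ / ‖y - x‖) * ((‖y - x‖⁻¹) ^ 2 * ⟪y - x, η⟫ ^ 2) := by
          rw [show c₀ / ‖y - x‖ ^ 3 = c₀ / ‖y - x‖ * (‖y - x‖⁻¹) ^ 2 by
            rw [div_eq_mul_inv, div_eq_mul_inv, ← inv_pow]; ring, mul_assoc]
      _ ≤ ρ y x * ((‖y - x‖⁻¹) ^ 2 * ⟪y - x, η⟫ ^ 2) :=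
          mul_le_mul_of_nonneg_right hρy' (by positivity)
  have contq : Continuous fun y : EuclideanSpace ℝ (Fin d) => ⟪y - x, η⟫ ^ 2 :=
    ((continuous_id.sub continuous_const).inner continuous_const).pow 2
  have key1 : ∫ y in ball c r, (c₀ / lam ^ 3) * ⟪y - x, η⟫ ^ 2
      ≤ ∫ y in ball c r, ρ y x * ⟪unitVec y x, η⟫ ^ 2 := by
    refine setIntegral_mono_on ?_ ?_ measurableSet_ball hpt
    · exact contIntOn (continuous_const.mul contq) _ _
    · exact hInt.mono_set hball_sub
  have key2 : ∫ y in ball c r, ρ y x * ⟪unitVec y x, η⟫ ^ 2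
      ≤ ∫ y in Ω ∩ ball x ε, ρ y x * ⟪unitVec y x, η⟫ ^ 2 := by
    refine setIntegral_mono_set hInt ?_ (HasSubset.Subset.eventuallyLE hball_sub)
    exact (ae_restrict_iff' (hΩm.inter measurableSet_ball)).mpr
      (Filter.Eventually.of_forall fun y hy => hgnn y hy)
  have key3 : ∫ z in ball (0 : EuclideanSpace ℝ (Fin d)) r, ⟪z, η⟫ ^ 2
      ≤ ∫ y in ball c r, ⟪y - x, η⟫ ^ 2 := transl_ge r c x η
  have key4 : κ * ‖η‖ ^ 2 = ∫ z in ball (0 : EuclideanSpace ℝ (Fin d)) r, ⟪z, η⟫ ^ 2 := by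
    set u : EuclideanSpace ℝ (Fin d) := ‖η‖⁻¹ • η with hudef
    have hun : ‖u‖ = 1 := norm_smul_inv_norm hη
    have hηu : ∀ z : EuclideanSpace ℝ (Fin d), ⟪z, η⟫ = ‖η‖ * ⟪z, u⟫ := by
      intro z
      rw [hudef, real_inner_smul_right, ← mul_assoc,
        mul_inv_cancel₀ (norm_ne_zero_iff.mpr hη), one_mul]
    simp_rw [hηu, mul_pow, integral_const_mul, rot_inv r u₀ u hu₀ hun, ← hκdef]
    ring
  calc (c₀ / lam ^ 3 * κ) * ‖η‖ ^ 2
      = (c₀ / lam ^ 3) * (κ * ‖η‖ ^ 2) := by ring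
    _ = (c₀ / lam ^ 3) * ∫ z in ball (0 : EuclideanSpace ℝ (Fin d)) r, ⟪z, η⟫ ^ 2 := by
        rw [key4]
    _ ≤ (c₀ / lam ^ 3) * ∫ y in ball c r, ⟪y - x, η⟫ ^ 2 :=
        mul_le_mul_of_nonneg_left key3 (by positivity)
    _ = ∫ y in ball c r, (c₀ / lam ^ 3) * ⟪y - x, η⟫ ^ 2 := (integral_const_mul _ _).symm
    _ ≤ ∫ y in ball c r, ρ y x * ⟪unitVec y x, η⟫ ^ 2 := key1
    _ ≤ ∫ y in Ω ∩ ball x ε, ρ y x * ⟪unitVec y x, η⟫ ^ 2 := key2
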